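/- Consider the augmented system (f_A, g_A, h_A) on ℝ × ℝ^{n_A} built from infinitely differentiable F : ℝ×ℝ^n → ℝ^n, G : ℝ×ℝ^n → ℝ^{n×r}, h : ℝ×ℝ^n → ℝ^m with r = m, and its integral augmented system (f_I, g_I, h_I) on ℝ × ℝ^{n_A+m} for a parameter β > 0. Fix l ∈ {1,…,m} and σ_l ≥ 1, and suppose L_{g_A} L_{f_A}^{i} h_{A,l}(t,x_A) = 0 for all (t,x_A) and all 0 ≤ i ≤ σ_l − 2. Then for every 0 ≤ i ≤ σ_l − 1 and every (t, x_A, ξ) ∈ ℝ × ℝ^{n_A} × ℝ^m: L_{f_I}^i h_{I,l}(t,(x_A,ξ)) = L_{f_A}^i h_{A,l}(t,x_A). -/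
import Mathlib


noncomputable section

open Real Finset

/-- One-step Lie derivative of a scalar function `ψ` along the time-varying vector field `F`
on a general state space: `L_F ψ (t,x) = (∂ₓ ψ)·F + ∂ₜ ψ`, expressed as the total (Fréchet)
derivative of `ψ` in the direction `(1, F(t,x))`. -/
def lieF {E : Type*} [NormedAddCommGroup E] [NormedSpace ℝ E]
    (F : ℝ × E → E) (ψ : ℝ × E → ℝ) : ℝ × E → ℝ :=
  fun p => fderiv ℝ ψ p (1, F p)

/-- Iterated Lie derivative `L_F^j ψ`, with `L_F^0 ψ = ψ`. -/
def lieFIter {E : Type*} [NormedAddCommGroup E] [NormedSpace ℝ E]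
    (F : ℝ × E → E) (ψ : ℝ × E → ℝ) (j : ℕ) : ℝ × E → ℝ :=
  (lieF F)^[j] ψ

/-- Mixed Lie derivative `L_Ĝ ψ (t,x) = (∂ₓ ψ)(t,x)·Ĝ(t,x) ∈ ℝ^{1×r}` as a row vector,
where the matrix field `Ĝ` is given through its columns `Ĝ(t,x) j ∈ E`. -/
def lieGcol {E : Type*} [NormedAddCommGroup E] [NormedSpace ℝ E] {r : ℕ}
    (G : ℝ × E → Fin r → E) (ψ : ℝ × E → ℝ) : ℝ × E → Fin r → ℝ :=
  fun p j => fderiv ℝ ψ p (0, G p j)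

/-- The augmented state space `x_A = (x, z̃)`, where `z̃` stacks the scalars
`z_k^{(0)}, …, z_k^{(ρ_k-1)}` for `k = 1,…,m`. -/
abbrev AugState (n m : ℕ) (ρ : Fin m → ℕ) : Type :=
  (Fin n → ℝ) × (∀ k : Fin m, Fin (ρ k) → ℝ)

/-- The augmented vector field `f_A`: first block `F(t,x)`; the `k`-th slack block is the
shift `(z_k^{(1)}, …, z_k^{(ρ_k-1)}, 0)`. -/
def augF {n m : ℕ} (ρ : Fin m → ℕ) (F : ℝ × (Fin n → ℝ) → Fin n → ℝ) :
    ℝ × AugState n m ρ → AugState n m ρ :=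
  fun p =>
    (F (p.1, p.2.1),
      fun k i => if hi : (i : ℕ) + 1 < ρ k then p.2.2 k ⟨(i : ℕ) + 1, hi⟩ else 0)

/-- The columns of the augmented input matrix `g_A`: first `n` rows `G(t,x)·D(z)` with
`D(z) = diag(z_1^{(0)},…,z_r^{(0)})`; remaining rows zero, except that the row in the slot
of `z_k^{(ρ_k-1)}` equals the `k`-th standard basis row. -/
def augG {n m : ℕ} (ρ : Fin m → ℕ) (G : ℝ × (Fin n → ℝ) → Fin n → Fin m → ℝ) :
    ℝ × AugState n m ρ → Fin m → AugState n m ρ :=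
  fun p j =>
    ((fun a => G (p.1, p.2.1) a j *
        (if h : 0 < ρ j then p.2.2 j ⟨0, h⟩ else 0)),
      fun k i => if k = j ∧ (i : ℕ) = ρ k - 1 then 1 else 0)

/-- The augmented output `h_A(t,(x,z̃)) = h(t,x)`, `l`-th component. -/
def augH {n m : ℕ} (ρ : Fin m → ℕ) (h : ℝ × (Fin n → ℝ) → Fin m → ℝ) (l : Fin m) :
    ℝ × AugState n m ρ → ℝ :=
  fun p => h (p.1, p.2.1) l

/-- The integral augmented state space `x_I = (x_A, ξ)`. -/
abbrev IntState (n m : ℕ) (ρ : Fin m → ℕ) : Type :=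
  AugState n m ρ × (Fin m → ℝ)

/-- The bounded saturation function `s_β(v) = 2β(1/(e^{-v}+1) - 1/2)` (Eq. (16) of the paper). -/
def sBeta (β v : ℝ) : ℝ := 2 * β * (1 / (Real.exp (-v) + 1) - 1 / 2)

/-- The integral augmented vector field `f_I(t,(x_A,ξ)) = (f_A(t,x_A) + g_A(t,x_A)·s_β(ξ), 0)`. -/
def intF {n m : ℕ} (ρ : Fin m → ℕ) (F : ℝ × (Fin n → ℝ) → Fin n → ℝ)
    (G : ℝ × (Fin n → ℝ) → Fin n → Fin m → ℝ) (β : ℝ) :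
    ℝ × IntState n m ρ → IntState n m ρ :=
  fun p =>
    (augF ρ F (p.1, p.2.1) + ∑ j, sBeta β (p.2.2 j) • augG ρ G (p.1, p.2.1) j, 0)

/-- The columns of the integral augmented input matrix `g_I = (0 ; I_m)`. -/
def intG {n m : ℕ} (ρ : Fin m → ℕ) :
    ℝ × IntState n m ρ → Fin m → IntState n m ρ :=
  fun _ j => (0, Pi.single j 1)

/-- The integral augmented output `h_I(t,(x_A,ξ)) = h_A(t,x_A)`, `l`-th component. -/
def intH {n m : ℕ} (ρ : Fin m → ℕ) (h : ℝ × (Fin n → ℝ) → Fin m → ℝ) (l : Fin m) :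
    ℝ × IntState n m ρ → ℝ :=
  fun p => augH ρ h l (p.1, p.2.1)


section AuxLemmas

lemma lieF_contDiff {E : Type*} [NormedAddCommGroup E] [NormedSpace ℝ E]
    (F : ℝ × E → E) (ψ : ℝ × E → ℝ)
    (hF : ContDiff ℝ (⊤ : ℕ∞) F) (hψ : ContDiff ℝ (⊤ : ℕ∞) ψ) :
    ContDiff ℝ (⊤ : ℕ∞) (lieF F ψ) :=
  (hψ.fderiv_right (by simp)).clm_apply (contDiff_const.prodMk hF)

lemma augF_contDiff {n m : ℕ} (ρ : Fin m → ℕ) (F : ℝ × (Fin n → ℝ) → Fin n → ℝ)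
    (hF : ContDiff ℝ (⊤ : ℕ∞) F) : ContDiff ℝ (⊤ : ℕ∞) (augF ρ F) := by
  have hproj : ∀ (k : Fin m) (j : Fin (ρ k)),
      ContDiff ℝ (⊤ : ℕ∞) (fun p : ℝ × AugState n m ρ => p.2.2 k j) := by
    intro k j
    exact contDiff_pi.1 (contDiff_pi.1 (contDiff_snd.comp contDiff_snd) k) j
  apply ContDiff.prodMk
  · exact hF.comp (contDiff_fst.prodMk (contDiff_fst.comp contDiff_snd))
  · apply contDiff_pi.2; intro k; apply contDiff_pi.2; intro i
    by_cases hi : (i : ℕ) + 1 < ρ k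
    · simp only [hi, dif_pos]
      exact hproj k ⟨(i : ℕ) + 1, hi⟩
    · simp only [hi, dif_neg, not_false_iff]
      exact contDiff_const

lemma augH_contDiff {n m : ℕ} (ρ : Fin m → ℕ) (h : ℝ × (Fin n → ℝ) → Fin m → ℝ)
    (l : Fin m) (hh : ContDiff ℝ (⊤ : ℕ∞) h) :
    ContDiff ℝ (⊤ : ℕ∞) (augH ρ h l) :=
  (contDiff_pi.1 hh l).comp (contDiff_fst.prodMk (contDiff_fst.comp contDiff_snd))

end AuxLemmas

/-- **First claim (Eq. (46)) in the proof of Corollary 1 of the paper.**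
For `0 ≤ i ≤ σ_l - 1`, the iterated Lie derivatives of the integral augmented system
coincide with those of the augmented system: `L_{f_I}^i h_{I,l}(t,(x_A,ξ)) = L_{f_A}^i h_{A,l}(t,x_A)`. -/
theorem integral_lie_eq_augmented_lie
    {n m : ℕ} (ρ : Fin m → ℕ) (hρ : ∀ k, 1 ≤ ρ k)
    (F : ℝ × (Fin n → ℝ) → Fin n → ℝ)
    (G : ℝ × (Fin n → ℝ) → Fin n → Fin m → ℝ)
    (h : ℝ × (Fin n → ℝ) → Fin m → ℝ)
    (hF : ContDiff ℝ (⊤ : ℕ∞) F) (hG : ContDiff ℝ (⊤ : ℕ∞) G)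
    (hh : ContDiff ℝ (⊤ : ℕ∞) h)
    (β : ℝ) (hβ : 0 < β)
    (l : Fin m) (σl : ℕ) (hσl : 1 ≤ σl)
    (hzero : ∀ i : ℕ, i + 2 ≤ σl →
      ∀ p : ℝ × AugState n m ρ,
        lieGcol (augG ρ G) (lieFIter (augF ρ F) (augH ρ h l) i) p = 0) :
    ∀ i ≤ σl - 1, ∀ (t : ℝ) (xA : AugState n m ρ) (ξ : Fin m → ℝ),
      lieFIter (intF ρ F G β) (intH ρ h l) i (t, (xA, ξ)) =
        lieFIter (augF ρ F) (augH ρ h l) i (t, xA) := by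
  have hiter : ∀ i, ContDiff ℝ (⊤ : ℕ∞) (lieFIter (augF ρ F) (augH ρ h l) i) := by
    intro i
    induction i with
    | zero => exact augH_contDiff ρ h l hh
    | succ i ih =>
      rw [lieFIter, Function.iterate_succ_apply']
      exact lieF_contDiff _ _ (augF_contDiff ρ F hF) ih
  set pr : (ℝ × IntState n m ρ) →L[ℝ] (ℝ × AugState n m ρ) :=
    (ContinuousLinearMap.id ℝ ℝ).prodMap
      (ContinuousLinearMap.fst ℝ (AugState n m ρ) (Fin m → ℝ)) with hpr
  intro i
  induction i with
  | zero => intro _ t xA ξ; rfl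
  | succ i ih =>
    intro hi t xA ξ
    have hi' : i ≤ σl - 1 := Nat.le_of_succ_le hi
    have hi2 : i + 2 ≤ σl := by omega
    have ihfun : lieFIter (intF ρ F G β) (intH ρ h l) i =
        fun p => lieFIter (augF ρ F) (augH ρ h l) i (pr p) := by
      funext p
      exact ih hi' p.1 p.2.1 p.2.2
    rw [lieFIter, Function.iterate_succ_apply', ← lieFIter, ihfun]
    rw [show lieFIter (augF ρ F) (augH ρ h l) (i + 1) =
        lieF (augF ρ F) (lieFIter (augF ρ F) (augH ρ h l) i) from by
      rw [lieFIter, Function.iterate_succ_apply', ← lieFIter]]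
    set ψ := lieFIter (augF ρ F) (augH ρ h l) i with hψdef
    have hdiff : DifferentiableAt ℝ ψ (pr (t, (xA, ξ))) :=
      ((hiter i).differentiable (by simp)).differentiableAt
    have hcomp : fderiv ℝ (fun p => ψ (pr p)) (t, (xA, ξ)) =
        (fderiv ℝ ψ (pr (t, (xA, ξ)))).comp (pr : (ℝ × IntState n m ρ) →L[ℝ] _) := by
      rw [show (fun p => ψ (pr p)) = ψ ∘ pr from rfl,
        fderiv_comp _ hdiff pr.differentiableAt, pr.fderiv]
    have hprp : pr (t, (xA, ξ)) = (t, xA) := rfl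
    simp only [lieF, hcomp, ContinuousLinearMap.comp_apply, hprp]
    have hdir : pr (1, intF ρ F G β (t, (xA, ξ))) =
        ((1, augF ρ F (t, xA)) : ℝ × AugState n m ρ) +
          ∑ j, sBeta β (ξ j) • ((0, augG ρ G (t, xA) j) : ℝ × AugState n m ρ) := by
      apply Prod.ext
      · simp [hpr, Prod.fst_sum]
      · simp [hpr, intF, Prod.snd_sum]
    rw [hdir, map_add, map_sum]
    have hz : ∀ j : Fin m,
        fderiv ℝ ψ (t, xA) (sBeta β (ξ j) • ((0, augG ρ G (t, xA) j) : ℝ × AugState n m ρ)) = 0 := by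
      intro j
      rw [map_smul]
      have := congrFun (hzero i hi2 (t, xA)) j
      simp only [lieGcol, ← hψdef] at this
      simp [this]
    rw [Finset.sum_congr rfl (fun j _ => hz j)]
    simp [lieF]
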